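/- Fix i ∈ {1,…,5}. Let A and B be the involutions on ℂ^5 given by A(x1,…,x5) = (−x1,−x2,−x3,−x4,x5) and B(x1,…,x5) = (x1,…,x4,−x5), and for a rational function f let f^{o,o}(x) = (f(x) − f(Ax) − f(Bx) + f(ABx))/4 be its component odd under both A and B. Then for the Chinta–Gunnells action of the simple reflection σi of D4^(1), one has (f|σi)^{o,o}(x;u) = −xi · f^{o,o}(σi x; u). In particular, if f^{o,o} = 0, then (f|σi)^{o,o} = 0. -/
import Mathlib


/-- Adjacency in the Dynkin diagram of `D4^(1)`: nodes `0,1,2,3` (the papers'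
`1,…,4`) are each attached to the central node `4` (the papers' `5`). -/
def adj (i j : Fin 5) : Prop := (i = 4 ∧ j ≠ 4) ∨ (i ≠ 4 ∧ j = 4)

instance (i j : Fin 5) : Decidable (adj i j) := by unfold adj; infer_instance

/-- Action of the simple reflection `σi` on the variables:
`(σi x)_i = 1/xᵢ`, `(σi x)_j = xᵢ·x_j` at Dynkin neighbors `j` of `i`, and
other coordinates are unchanged. -/
noncomputable def sigAct {K : Type*} [Field K] (i : Fin 5) (x : Fin 5 → K) : Fin 5 → K :=
  fun j => if j = i then (x i)⁻¹ else if adj i j then x i * x j else x j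

/-- The sign involution `εi`: `(εi x)_j = −x_j` exactly at Dynkin neighbors `j` of `i`. -/
def epsAct {K : Type*} [Field K] (i : Fin 5) (x : Fin 5 → K) : Fin 5 → K :=
  fun j => if adj i j then -x j else x j

/-- The building block `J(x,u,ε) = (x/2)·((u−x)/(1−ux) − (−1)^ε)`. -/
noncomputable def J {K : Type*} [Field K] (x u : K) (ε : ℕ) : K :=
  x / 2 * ((u - x) / (1 - u * x) - (-1) ^ ε)

/-- The Chinta–Gunnells action of the simple reflection `σi`:
`f|σi(x;u) = f(σi x;u)·J(xᵢ,u,0) + f(εi σi x;u)·J(xᵢ,u,1)`. -/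
noncomputable def cg {K : Type*} [Field K] (i : Fin 5) (f : (Fin 5 → K) → K → K) :
    (Fin 5 → K) → K → K :=
  fun x u => f (sigAct i x) u * J (x i) u 0 + f (epsAct i (sigAct i x)) u * J (x i) u 1

/-- The involution `A(x1,…,x5) = (−x1,−x2,−x3,−x4,x5)`. -/
def invA (x : Fin 5 → ℂ) : Fin 5 → ℂ := fun j => if j = 4 then x j else -x j

/-- The involution `B(x1,…,x5) = (x1,…,x4,−x5)`. -/
def invB (x : Fin 5 → ℂ) : Fin 5 → ℂ := fun j => if j = 4 then -x j else x j

/-- The component of `f` odd under both `A` and `B`: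
`f^{o,o}(x) = (f(x) − f(Ax) − f(Bx) + f(ABx))/4`. -/
noncomputable def ooPart (f : (Fin 5 → ℂ) → ℂ → ℂ) (x : Fin 5 → ℂ) (u : ℂ) : ℂ :=
  (f x u - f (invA x) u - f (invB x) u + f (invA (invB x)) u) / 4


section Aux

lemma invA_invA (x : Fin 5 → ℂ) : invA (invA x) = x := by
  funext j; simp only [invA]; split_ifs <;> ring

lemma invB_invB (x : Fin 5 → ℂ) : invB (invB x) = x := by
  funext j; simp only [invB]; split_ifs <;> ring

lemma invB_invA (x : Fin 5 → ℂ) : invB (invA x) = invA (invB x) := by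
  funext j; simp only [invA, invB]; split_ifs <;> ring

lemma invA_app {i : Fin 5} (hi : i ≠ 4) (x : Fin 5 → ℂ) : invA x i = -x i := by
  simp [invA, hi]

lemma invB_app {i : Fin 5} (hi : i ≠ 4) (x : Fin 5 → ℂ) : invB x i = x i := by
  simp [invB, hi]

lemma invA_app4 (x : Fin 5 → ℂ) : invA x 4 = x 4 := by simp [invA]

lemma invB_app4 (x : Fin 5 → ℂ) : invB x 4 = -x 4 := by simp [invB]

lemma eps4 (x : Fin 5 → ℂ) : epsAct 4 x = invA x := by
  funext j; by_cases h : j = 4 <;> simp [epsAct, invA, adj, h]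

lemma epsne {i : Fin 5} (hi : i ≠ 4) (x : Fin 5 → ℂ) : epsAct i x = invB x := by
  funext j; by_cases h : j = 4 <;> simp [epsAct, invB, adj, h, hi]

lemma sigA_ne {i : Fin 5} (hi : i ≠ 4) (x : Fin 5 → ℂ) :
    sigAct i (invA x) = invA (invB (sigAct i x)) := by
  funext j
  by_cases hj4 : j = 4
  · subst hj4
    have hji : (4:Fin 5) ≠ i := fun h => hi h.symm
    simp [sigAct, invA, invB, adj, hi, hji]
  · by_cases hji : j = i
    · subst hji
      simp [sigAct, invA, invB, adj, hi, hj4, inv_neg]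
    · simp [sigAct, invA, invB, adj, hi, hj4, hji]

lemma sigB_ne {i : Fin 5} (hi : i ≠ 4) (x : Fin 5 → ℂ) :
    sigAct i (invB x) = invB (sigAct i x) := by
  funext j
  by_cases hj4 : j = 4
  · subst hj4
    have hji : (4:Fin 5) ≠ i := fun h => hi h.symm
    simp [sigAct, invA, invB, adj, hi, hji]
  · by_cases hji : j = i
    · subst hji
      simp [sigAct, invA, invB, adj, hi, hj4, inv_neg]
    · simp [sigAct, invA, invB, adj, hi, hj4, hji]

lemma sigA4 (x : Fin 5 → ℂ) : sigAct 4 (invA x) = invA (sigAct 4 x) := by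
  funext j
  by_cases hj4 : j = 4 <;> simp [sigAct, invA, invB, adj, hj4]

lemma sigB4 (x : Fin 5 → ℂ) : sigAct 4 (invB x) = invA (invB (sigAct 4 x)) := by
  funext j
  by_cases hj4 : j = 4 <;> simp [sigAct, invA, invB, adj, hj4, inv_neg]

end Aux

/-- `(f|σi)^{o,o}(x;u) = −xᵢ · f^{o,o}(σi x; u)`; in particular `f^{o,o} = 0`
implies `(f|σi)^{o,o} = 0`. -/
theorem stmt13 (i : Fin 5) (f : (Fin 5 → ℂ) → ℂ → ℂ) :
    (∀ (x : Fin 5 → ℂ) (u : ℂ), ooPart (cg i f) x u = -(x i) * ooPart f (sigAct i x) u) ∧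
    ((∀ x u, ooPart f x u = 0) → ∀ x u, ooPart (cg i f) x u = 0) := by
  have main : ∀ (x : Fin 5 → ℂ) (u : ℂ),
      ooPart (cg i f) x u = -(x i) * ooPart f (sigAct i x) u := by
    intro x u
    have hJ : ∀ t : ℂ, J t u 0 = J t u 1 - t := by
      intro t; simp [J]; ring
    by_cases hi : i = 4
    · subst hi
      simp only [ooPart, cg, eps4, sigA4, sigB4, invA_invA, invB_invA, invB_invB,
        invA_app4, invB_app4]
      simp only [hJ]
      ring
    · simp only [ooPart, cg, epsne hi, sigA_ne hi, sigB_ne hi, invA_invA,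
        invB_invA, invB_invB, invA_app hi, invB_app hi]
      simp only [hJ]
      ring
  refine ⟨main, fun h x u => ?_⟩
  rw [main x u, h]
  ring
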